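/- Let K be a natural number and let V₀, V₁, …, V_K : [0,∞) → ℝ be nonnegative nondecreasing functions. Assume there exists x₀ > 0 with V₀(x₀) > 0. Let f : [0,∞) → ℝ be twice continuously differentiable with f(0) > 0, f'(0) = 0, and f''(x) = −(∑_{k=0}^K V_k(x) f(x)^{2k}) · f(x) for all x ≥ 0. Then, setting m₀ = 0, there exist strictly increasing sequences (m_j)_{j≥1} and (n_j)_{j≥1} of positive reals, both tending to ∞, such that for every j ≥ 1: m_{j−1} < n_j < m_j, m_j is a local maximum point of x ↦ f(x)², n_j is a local maximum point of x ↦ f'(x)², and the inequalities ∑_{k=0}^K (V_k(n_j)/(k+1)) f(m_j)^{2(k+1)} ≤ f'(n_j)² ≤ ∑_{k=0}^K (V_k(n_j)/(k+1)) f(m_{j−1})^{2(k+1)} and ∑_{k=0}^K (V_k(m_j)/(k+1)) f(m_j)^{2(k+1)} ≥ f'(n_j)² ≥ ∑_{k=0}^K (V_k(m_{j−1})/(k+1)) f(m_{j−1})^{2(k+1)} hold. -/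

import Mathlib

open Filter
open Set

private lemma endpoint_le {g g' : ℝ → ℝ} {p q : ℝ}
    (h : ∀ x ∈ Set.Icc p q, HasDerivAt g (g' x) x)
    (hs : ∀ x ∈ Set.Icc p q, 0 ≤ g' x) (hpq : p ≤ q) : g p ≤ g q := by
  have hmono : MonotoneOn g (Set.Icc p q) := by
    apply monotoneOn_of_deriv_nonneg (convex_Icc p q)
    · exact fun x hx => (h x hx).continuousAt.continuousWithinAt
    · intro x hx
      rw [interior_Icc] at hx
      exact (h x (Ioo_subset_Icc_self hx)).differentiableAt.differentiableWithinAt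
    · intro x hx
      rw [interior_Icc] at hx
      rw [(h x (Ioo_subset_Icc_self hx)).deriv]
      exact hs x (Ioo_subset_Icc_self hx)
  exact hmono (left_mem_Icc.2 hpq) (right_mem_Icc.2 hpq) hpq

private lemma endpoint_ge {g g' : ℝ → ℝ} {p q : ℝ}
    (h : ∀ x ∈ Set.Icc p q, HasDerivAt g (g' x) x)
    (hs : ∀ x ∈ Set.Icc p q, g' x ≤ 0) (hpq : p ≤ q) : g q ≤ g p := by
  have := endpoint_le (g := fun x => -g x) (g' := fun x => -(g' x))
    (fun x hx => (h x hx).neg) (fun x hx => neg_nonneg.2 (hs x hx)) hpq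
  simpa using this

private lemma endpoint_lt {g g' : ℝ → ℝ} {p q : ℝ}
    (h : ∀ x ∈ Set.Icc p q, HasDerivAt g (g' x) x)
    (hs : ∀ x ∈ Set.Ioo p q, g' x < 0) (hpq : p < q) : g q < g p := by
  have hanti : StrictAntiOn g (Set.Icc p q) := by
    apply strictAntiOn_of_deriv_neg (convex_Icc p q)
    · exact fun x hx => (h x hx).continuousAt.continuousWithinAt
    · intro x hx
      rw [interior_Icc] at hx
      rw [(h x (Ioo_subset_Icc_self hx)).deriv]
      exact hs x hx
  exact hanti (left_mem_Icc.2 hpq.le) (right_mem_Icc.2 hpq.le) hpq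

private lemma smooth_facts {f : ℝ → ℝ} (hf : ContDiff ℝ 2 f) :
    Differentiable ℝ f ∧ Differentiable ℝ (deriv f) ∧ Continuous (deriv (deriv f)) := by
  have h2 : ContDiff ℝ ((1:ℕ∞) + 1) f := by norm_num at hf ⊢; exact hf
  have h1 : ContDiff ℝ 1 (deriv f) := (contDiff_succ_iff_deriv.mp h2).2.2
  refine ⟨hf.differentiable (by norm_num), h1.differentiable one_ne_zero, ?_⟩
  exact h1.continuous_deriv le_rfl


private lemma back_zero (K : ℕ) (V : ℕ → ℝ → ℝ)
    (hVnonneg : ∀ k ≤ K, ∀ x : ℝ, 0 ≤ x → 0 ≤ V k x)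
    (hVmono : ∀ k ≤ K, MonotoneOn (V k) (Set.Ici (0 : ℝ)))
    {f : ℝ → ℝ} (hdf : Differentiable ℝ f) (hdf' : Differentiable ℝ (deriv f))
    (hODE : ∀ x : ℝ, 0 ≤ x →
      deriv (deriv f) x = -(∑ k ∈ Finset.range (K + 1), V k x * f x ^ (2 * k)) * f x)
    {p q : ℝ} (hp : 0 ≤ p) (hpq : p ≤ q) (hq : f q = 0) (hq' : deriv f q = 0) :
    f p = 0 := by
  obtain ⟨B0, hB0⟩ : ∃ C, ∀ x ∈ Set.Icc p q, ‖f x‖ ≤ C :=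
    (isCompact_Icc).exists_bound_of_continuousOn hdf.continuous.continuousOn
  set B : ℝ := max B0 1 with hBdef
  have hB1 : (1:ℝ) ≤ B := le_max_right _ _
  have hB : ∀ x ∈ Set.Icc p q, |f x| ≤ B := fun x hx => (hB0 x hx).trans (le_max_left _ _)
  set C : ℝ := 1 + ∑ k ∈ Finset.range (K + 1), V k q * B ^ (2 * k) with hCdef
  have hq0 : 0 ≤ q := hp.trans hpq
  have hsum_nonneg : 0 ≤ ∑ k ∈ Finset.range (K + 1), V k q * B ^ (2 * k) :=
    Finset.sum_nonneg fun k hk => mul_nonneg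
      (hVnonneg k (Finset.mem_range_succ_iff.mp hk) q hq0)
      (pow_nonneg (by linarith) _)
  have hC1 : (1:ℝ) ≤ C := by simp only [hCdef]; linarith
  -- bound on W
  have hW : ∀ x ∈ Set.Icc p q,
      (0 ≤ ∑ k ∈ Finset.range (K + 1), V k x * f x ^ (2 * k)) ∧
      (∑ k ∈ Finset.range (K + 1), V k x * f x ^ (2 * k)) ≤ C - 1 := by
    intro x hx
    have hx0 : 0 ≤ x := hp.trans hx.1
    constructor
    · exact Finset.sum_nonneg fun k hk => mul_nonneg
        (hVnonneg k (Finset.mem_range_succ_iff.mp hk) x hx0)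
        (Even.pow_nonneg (even_two_mul k) _)
    · have : C - 1 = ∑ k ∈ Finset.range (K + 1), V k q * B ^ (2 * k) := by
        simp [hCdef]
      rw [this]
      apply Finset.sum_le_sum
      intro k hk
      have hkK := Finset.mem_range_succ_iff.mp hk
      have hVx : V k x ≤ V k q := hVmono k hkK hx0 hq0 hx.2
      have hfx : f x ^ (2 * k) ≤ B ^ (2 * k) := by
        calc f x ^ (2 * k) = |f x| ^ (2 * k) := by
              rw [← abs_pow, abs_of_nonneg (Even.pow_nonneg (even_two_mul k) _)]
        _ ≤ B ^ (2 * k) := pow_le_pow_left₀ (abs_nonneg _) (hB x hx) _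
      exact mul_le_mul hVx hfx (Even.pow_nonneg (even_two_mul k) _)
        ((hVnonneg k hkK q hq0))
  -- the function h = f^2 + f'^2, g = h * exp (C x)
  set h : ℝ → ℝ := fun x => f x ^ 2 + deriv f x ^ 2 with hhdef
  have hder : ∀ x ∈ Set.Icc p q, HasDerivAt (fun y => h y * Real.exp (C * y))
      ((2 * f x * deriv f x + 2 * deriv f x * deriv (deriv f) x + C * h x) * Real.exp (C * x)) x := by
    intro x hx
    have h1 : HasDerivAt h (2 * f x * deriv f x + 2 * deriv f x * deriv (deriv f) x) x := by
      have ha : HasDerivAt (fun y => f y ^ 2) (2 * f x ^ 1 * deriv f x) x :=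
        ((hdf x).hasDerivAt).pow 2
      have hb : HasDerivAt (fun y => deriv f y ^ 2) (2 * deriv f x ^ 1 * deriv (deriv f) x) x :=
        ((hdf' x).hasDerivAt).pow 2
      have : HasDerivAt (fun y => f y ^ 2 + deriv f y ^ 2) _ x := ha.add hb
      convert this using 1
      push_cast
      ring
    have h2 : HasDerivAt (fun y => Real.exp (C * y)) (Real.exp (C * x) * C) x := by
      simpa using ((hasDerivAt_id x).const_mul C).exp
    have : HasDerivAt (fun y => h y * Real.exp (C * y)) _ x := h1.mul h2
    convert this using 1
    ring
  have hsign : ∀ x ∈ Set.Icc p q,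
      0 ≤ (2 * f x * deriv f x + 2 * deriv f x * deriv (deriv f) x + C * h x) * Real.exp (C * x) := by
    intro x hx
    apply mul_nonneg _ (Real.exp_nonneg _)
    obtain ⟨hW0, hWC⟩ := hW x hx
    rw [hODE x (hp.trans hx.1)]
    set W := ∑ k ∈ Finset.range (K + 1), V k x * f x ^ (2 * k)
    have e1 : 2 * f x * deriv f x + 2 * deriv f x * (-W * f x) + C * h x
        = 2 * f x * deriv f x * (1 - W) + C * (f x ^ 2 + deriv f x ^ 2) := by
      simp only [hhdef]; ring
    rw [e1]
    nlinarith [sq_nonneg (f x + deriv f x), sq_nonneg (f x - deriv f x),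
      mul_nonneg hW0 (sq_nonneg (f x + deriv f x)), mul_nonneg hW0 (sq_nonneg (f x - deriv f x)),
      mul_nonneg (mul_nonneg hW0 (sq_nonneg (f x))) (sub_nonneg.2 hC1)]
  have hle := endpoint_le hder hsign hpq
  have hhq : h q = 0 := by simp [hhdef, hq, hq']
  have : h p * Real.exp (C * p) ≤ 0 := by
    have := hle
    simp only [hhq, zero_mul] at this
    exact this
  have hhp : h p ≤ 0 := by
    have hexp : 0 < Real.exp (C * p) := Real.exp_pos _
    nlinarith
  have : f p ^ 2 ≤ 0 := by
    have := sq_nonneg (deriv f p)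
    simp only [hhdef] at hhp
    linarith
  nlinarith [sq_nonneg (f p)]


private lemma exists_zero (K : ℕ) (V : ℕ → ℝ → ℝ)
    (hVnonneg : ∀ k ≤ K, ∀ x : ℝ, 0 ≤ x → 0 ≤ V k x)
    (hVmono : ∀ k ≤ K, MonotoneOn (V k) (Set.Ici (0 : ℝ)))
    (x₀ : ℝ) (hx₀ : 0 < x₀) (hV₀ : 0 < V 0 x₀)
    {f : ℝ → ℝ} (hdf : Differentiable ℝ f) (hdf' : Differentiable ℝ (deriv f))
    (hODE : ∀ x : ℝ, 0 ≤ x →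
      deriv (deriv f) x = -(∑ k ∈ Finset.range (K + 1), V k x * f x ^ (2 * k)) * f x)
    (b : ℝ) (hb : 0 ≤ b) : ∃ ζ, b < ζ ∧ f ζ = 0 := by
  by_contra hcon
  push_neg at hcon
  set c : ℝ := V 0 x₀ with hcdef
  have hc : 0 < c := hV₀
  set sc : ℝ := Real.sqrt c with hscdef
  have hsc : 0 < sc := Real.sqrt_pos.2 hc
  have hscsq : sc * sc = c := Real.mul_self_sqrt hc.le
  set L : ℝ := Real.pi / sc with hLdef
  have hL : 0 < L := div_pos Real.pi_pos hsc
  set a : ℝ := max b x₀ + 1 with hadef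
  have hax : x₀ ≤ a := by
    have := le_max_right b x₀; simp only [hadef]; linarith
  have hab : b < a := by
    have := le_max_left b x₀; simp only [hadef]; linarith
  have ha0 : 0 < a := lt_of_lt_of_le hx₀ hax
  -- no zero of f on [a, a+L]
  have hnz : ∀ x ∈ Set.Icc a (a + L), f x ≠ 0 := by
    intro x hx
    exact hcon x (lt_of_lt_of_le hab hx.1)
  -- f has constant sign on [a, a+L]
  have hsign : (∀ x ∈ Set.Icc a (a + L), 0 < f x) ∨ (∀ x ∈ Set.Icc a (a + L), f x < 0) := by
    rcases lt_or_gt_of_ne (hnz a (left_mem_Icc.2 (by linarith))) with hfa | hfa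
    · right
      intro x hx
      by_contra hge
      push_neg at hge
      have h0 : (0:ℝ) ∈ Set.Icc (f a) (f x) := ⟨hfa.le, hge⟩
      obtain ⟨ζ, hζ1, hζ2⟩ := intermediate_value_Icc hx.1 hdf.continuous.continuousOn h0
      exact hnz ζ ⟨hζ1.1, hζ1.2.trans hx.2⟩ hζ2
    · left
      intro x hx
      by_contra hge
      push_neg at hge
      have h0 : (0:ℝ) ∈ Set.Icc (f x) (f a) := ⟨hge, hfa.le⟩
      obtain ⟨ζ, hζ1, hζ2⟩ := intermediate_value_Icc' hx.1 hdf.continuous.continuousOn h0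
      exact hnz ζ ⟨hζ1.1, hζ1.2.trans hx.2⟩ hζ2
  -- Wronskian with comparison solution sin(sc (x - a))
  set u : ℝ → ℝ := fun x =>
    f x * (sc * Real.cos (sc * (x - a))) - deriv f x * Real.sin (sc * (x - a)) with hudef
  have hu : ∀ x ∈ Set.Icc a (a + L), HasDerivAt u
      (((∑ k ∈ Finset.range (K + 1), V k x * f x ^ (2 * k)) - c) * f x
        * Real.sin (sc * (x - a))) x := by
    intro x hx
    have hx0 : 0 ≤ x := (ha0.le).trans hx.1
    have hθ : HasDerivAt (fun y => sc * (y - a)) sc x := by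
      simpa using ((hasDerivAt_id x).sub_const a).const_mul sc
    have hsin : HasDerivAt (fun y => Real.sin (sc * (y - a)))
        (Real.cos (sc * (x - a)) * sc) x := hθ.sin
    have hcos : HasDerivAt (fun y => sc * Real.cos (sc * (y - a)))
        (sc * (-Real.sin (sc * (x - a)) * sc)) x := hθ.cos.const_mul sc
    have h1 : HasDerivAt u _ x := ((hdf x).hasDerivAt.mul hcos).sub (((hdf' x).hasDerivAt).mul hsin)
    convert h1 using 1
    rw [hODE x hx0]
    have : c = sc * sc := hscsq.symm
    rw [this]
    ring
  have hθmem : ∀ x ∈ Set.Icc a (a + L), 0 ≤ Real.sin (sc * (x - a)) := by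
    intro x hx
    apply Real.sin_nonneg_of_nonneg_of_le_pi
    · exact mul_nonneg hsc.le (by linarith [hx.1])
    · calc sc * (x - a) ≤ sc * L := by nlinarith [hx.2]
      _ = Real.pi := by
          rw [hLdef]; field_simp
  have hWc : ∀ x ∈ Set.Icc a (a + L),
      c ≤ ∑ k ∈ Finset.range (K + 1), V k x * f x ^ (2 * k) := by
    intro x hx
    have hx0 : (0:ℝ) ≤ x := ha0.le.trans hx.1
    have h0 : V 0 x * f x ^ (2 * 0) = V 0 x := by simp
    calc c ≤ V 0 x := hVmono 0 (Nat.zero_le K) (le_of_lt hx₀) hx0 (hax.trans hx.1)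
    _ = V 0 x * f x ^ (2 * 0) := by simp
    _ ≤ ∑ k ∈ Finset.range (K + 1), V k x * f x ^ (2 * k) := by
        apply Finset.single_le_sum (f := fun k => V k x * f x ^ (2 * k))
        · intro k hk
          exact mul_nonneg (hVnonneg k (Finset.mem_range_succ_iff.mp hk) x hx0)
            (Even.pow_nonneg (even_two_mul k) _)
        · simp
  have hua : u a = sc * f a := by
    show f a * (sc * Real.cos (sc * (a - a))) - deriv f a * Real.sin (sc * (a - a)) = _
    simp [mul_comm]
  have hπ : sc * (a + L - a) = Real.pi := by
    simp only [add_sub_cancel_left, hLdef]; field_simp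
  have huaL : u (a + L) = -(sc * f (a + L)) := by
    show f (a + L) * (sc * Real.cos (sc * (a + L - a)))
      - deriv f (a + L) * Real.sin (sc * (a + L - a)) = _
    rw [hπ, Real.cos_pi, Real.sin_pi]
    ring
  have haL : a ≤ a + L := by linarith
  rcases hsign with hpos | hneg
  · have hmono := endpoint_le hu (fun x hx => by
      have h1 := hWc x hx
      have h2 := hθmem x hx
      have h3 := hpos x hx
      exact mul_nonneg (mul_nonneg (by linarith) h3.le) h2) haL
    rw [hua, huaL] at hmono
    have h1 : 0 < sc * f a := mul_pos hsc (hpos a (left_mem_Icc.2 haL))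
    have h2 : 0 < sc * f (a + L) := mul_pos hsc (hpos (a + L) (right_mem_Icc.2 haL))
    linarith
  · have hmono := endpoint_ge hu (fun x hx => by
      have h1 := hWc x hx
      have h2 := hθmem x hx
      have h3 := hneg x hx
      have : ((∑ k ∈ Finset.range (K + 1), V k x * f x ^ (2 * k)) - c) * f x ≤ 0 :=
        mul_nonpos_of_nonneg_of_nonpos (by linarith) h3.le
      exact mul_nonpos_of_nonpos_of_nonneg this h2) haL
    rw [hua, huaL] at hmono
    have h1 : sc * f a < 0 := mul_neg_of_pos_of_neg hsc (hneg a (left_mem_Icc.2 haL))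
    have h2 : sc * f (a + L) < 0 := mul_neg_of_pos_of_neg hsc (hneg (a + L) (right_mem_Icc.2 haL))
    linarith


private lemma energy_deriv (K : ℕ) (V : ℕ → ℝ → ℝ)
    {f : ℝ → ℝ} (hdf : Differentiable ℝ f) (hdf' : Differentiable ℝ (deriv f))
    (hODE : ∀ x : ℝ, 0 ≤ x →
      deriv (deriv f) x = -(∑ k ∈ Finset.range (K + 1), V k x * f x ^ (2 * k)) * f x)
    (a x : ℝ) (hx : 0 ≤ x) :
    HasDerivAt (fun y => deriv f y ^ 2 +
        ∑ k ∈ Finset.range (K + 1), V k a / ((k : ℝ) + 1) * f y ^ (2 * (k + 1)))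
      (∑ k ∈ Finset.range (K + 1),
        2 * (f x * deriv f x * (V k a - V k x)) * f x ^ (2 * k)) x := by
  have h1 : HasDerivAt (fun y => deriv f y ^ 2)
      (2 * deriv f x * deriv (deriv f) x) x := by
    have : HasDerivAt (fun y => deriv f y ^ 2) _ x := ((hdf' x).hasDerivAt).pow 2
    convert this using 1; push_cast; ring
  have h2 : ∀ k ∈ Finset.range (K + 1), HasDerivAt
      (fun y => V k a / ((k : ℝ) + 1) * f y ^ (2 * (k + 1)))
      (2 * V k a * f x ^ (2 * k) * f x * deriv f x) x := by
    intro k _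
    have hp : HasDerivAt (fun y => V k a / ((k : ℝ) + 1) * f y ^ (2 * (k + 1))) _ x := (((hdf x).hasDerivAt).pow (2 * (k + 1))).const_mul (V k a / ((k : ℝ) + 1))
    convert hp using 1
    have hk1 : ((k : ℝ) + 1) ≠ 0 := by positivity
    have he : 2 * (k + 1) - 1 = 2 * k + 1 := by omega
    rw [he]
    push_cast
    rw [pow_succ]
    field_simp
  have hsum : HasDerivAt
      (fun y => ∑ k ∈ Finset.range (K + 1), V k a / ((k : ℝ) + 1) * f y ^ (2 * (k + 1)))
      (∑ k ∈ Finset.range (K + 1), 2 * V k a * f x ^ (2 * k) * f x * deriv f x) x :=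
    HasDerivAt.fun_sum h2
  have htot : HasDerivAt (fun y => deriv f y ^ 2 +
        ∑ k ∈ Finset.range (K + 1), V k a / ((k : ℝ) + 1) * f y ^ (2 * (k + 1))) _ x := h1.add hsum
  convert htot using 1
  rw [hODE x hx]
  have hS : 2 * deriv f x * ((∑ k ∈ Finset.range (K + 1), V k x * f x ^ (2 * k)) * f x)
      = ∑ k ∈ Finset.range (K + 1), 2 * V k x * f x ^ (2 * k) * f x * deriv f x := by
    rw [Finset.sum_mul, Finset.mul_sum]
    exact Finset.sum_congr rfl fun k _ => by ring
  rw [neg_mul, mul_neg, hS, neg_add_eq_sub, ← Finset.sum_sub_distrib]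
  exact Finset.sum_congr rfl fun k _ => by ring


set_option maxHeartbeats 1600000 in
private lemma step_pos (K : ℕ) (V : ℕ → ℝ → ℝ)
    (hVnonneg : ∀ k ≤ K, ∀ x : ℝ, 0 ≤ x → 0 ≤ V k x)
    (hVmono : ∀ k ≤ K, MonotoneOn (V k) (Set.Ici (0 : ℝ)))
    (x₀ : ℝ) (hx₀ : 0 < x₀) (hV₀ : 0 < V 0 x₀)
    {f : ℝ → ℝ} (hdf : Differentiable ℝ f) (hdf' : Differentiable ℝ (deriv f))
    (hODE : ∀ x : ℝ, 0 ≤ x →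
      deriv (deriv f) x = -(∑ k ∈ Finset.range (K + 1), V k x * f x ^ (2 * k)) * f x)
    (m : ℝ) (hm : 0 ≤ m) (hdm : deriv f m = 0) (hfm : 0 < f m) :
    ∃ n m', m < n ∧ n < m' ∧ f n = 0 ∧ deriv f m' = 0 ∧ f m' ≠ 0 ∧
      IsLocalMax (fun x => f x ^ 2) m' ∧ IsLocalMax (fun x => deriv f x ^ 2) n ∧
      (∑ k ∈ Finset.range (K + 1), V k n / ((k : ℝ) + 1) * f m' ^ (2 * (k + 1)))
        ≤ deriv f n ^ 2 ∧
      deriv f n ^ 2 ≤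
        (∑ k ∈ Finset.range (K + 1), V k n / ((k : ℝ) + 1) * f m ^ (2 * (k + 1))) ∧
      deriv f n ^ 2 ≤
        (∑ k ∈ Finset.range (K + 1), V k m' / ((k : ℝ) + 1) * f m' ^ (2 * (k + 1))) ∧
      (∑ k ∈ Finset.range (K + 1), V k m / ((k : ℝ) + 1) * f m ^ (2 * (k + 1)))
        ≤ deriv f n ^ 2 := by
  have hcont : Continuous f := hdf.continuous
  have hcont' : Continuous (deriv f) := hdf'.continuous
  have hW0 : ∀ x, 0 ≤ x → 0 ≤ ∑ k ∈ Finset.range (K + 1), V k x * f x ^ (2 * k) :=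
    fun x hx => Finset.sum_nonneg fun k hk => mul_nonneg
      (hVnonneg k (Finset.mem_range_succ_iff.mp hk) x hx)
      (Even.pow_nonneg (even_two_mul k) _)
  -- derivative HasDerivAt packaging
  have hD1 : ∀ (p q : ℝ), ∀ x ∈ Set.Icc p q, HasDerivAt f (deriv f x) x :=
    fun _ _ x _ => (hdf x).hasDerivAt
  have hD2 : ∀ (p q : ℝ), ∀ x ∈ Set.Icc p q, HasDerivAt (deriv f) (deriv (deriv f) x) x :=
    fun _ _ x _ => (hdf' x).hasDerivAt
  have hDsq : ∀ x : ℝ, HasDerivAt (fun y => deriv f y ^ 2)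
      (2 * deriv f x * deriv (deriv f) x) x := by
    intro x
    have : HasDerivAt (fun y => deriv f y ^ 2) _ x := ((hdf' x).hasDerivAt).pow 2
    convert this using 1; push_cast; ring
  have hDfsq : ∀ x : ℝ, HasDerivAt (fun y => f y ^ 2) (2 * f x * deriv f x) x := by
    intro x
    have : HasDerivAt (fun y => f y ^ 2) _ x := ((hdf x).hasDerivAt).pow 2
    convert this using 1; push_cast; ring
  ------------------------------------------------------------------
  -- STEP 1: first zero z of f after m
  obtain ⟨ζ, hζ1, hζ2⟩ := exists_zero K V hVnonneg hVmono x₀ hx₀ hV₀ hdf hdf' hODE m hm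
  set Z : Set ℝ := {x | m < x ∧ f x = 0} with hZdef
  have hZne : Z.Nonempty := ⟨ζ, hζ1, hζ2⟩
  have hZbdd : BddBelow Z := by
    refine ⟨m, fun x hx => ?_⟩
    have hx' : m < x ∧ f x = 0 := hx
    exact hx'.1.le
  set z : ℝ := sInf Z with hzdef
  have hzcl : m ≤ z ∧ f z = 0 := by
    have hcls : IsClosed {x : ℝ | m ≤ x ∧ f x = 0} :=
      (isClosed_le continuous_const continuous_id).inter (isClosed_eq hcont continuous_const)
    have h1 : Z ⊆ {x : ℝ | m ≤ x ∧ f x = 0} := by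
      intro x hx
      have hx' : m < x ∧ f x = 0 := hx
      exact ⟨hx'.1.le, hx'.2⟩
    exact closure_minimal h1 hcls (csInf_mem_closure hZne hZbdd)
  have hfz : f z = 0 := hzcl.2
  have hmz : m < z := lt_of_le_of_ne hzcl.1 (by
    intro h; rw [h, hfz] at hfm; exact lt_irrefl _ hfm)
  have hz0 : (0:ℝ) ≤ z := hm.trans hmz.le
  have hfpos : ∀ x, m ≤ x → x < z → 0 < f x := by
    intro x hx1 hx2
    rcases eq_or_lt_of_le hx1 with rfl | hmx
    · exact hfm
    by_contra hle
    push_neg at hle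
    have h0 : (0:ℝ) ∈ Set.Icc (f x) (f m) := ⟨hle, hfm.le⟩
    obtain ⟨w, hw1, hw2⟩ := intermediate_value_Icc' hmx.le hcont.continuousOn h0
    have hwm : m < w := by
      rcases eq_or_lt_of_le hw1.1 with rfl | h
      · rw [hw2] at hfm; exact absurd hfm (lt_irrefl _)
      · exact h
    have : z ≤ w := csInf_le hZbdd ⟨hwm, hw2⟩
    linarith [hw1.2]
  have hfnn : ∀ x ∈ Set.Icc m z, 0 ≤ f x := by
    intro x hx
    rcases eq_or_lt_of_le hx.2 with rfl | h
    · rw [hfz]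
    · exact (hfpos x hx.1 h).le
  -- f' ≤ 0 on [m, z]
  have hf''np : ∀ p q, m ≤ p → q ≤ z → ∀ x ∈ Set.Icc p q, deriv (deriv f) x ≤ 0 := by
    intro p q hp hq x hx
    have hx0 : (0:ℝ) ≤ x := hm.trans (hp.trans hx.1)
    rw [hODE x hx0]
    have h1 := hW0 x hx0
    have h2 := hfnn x ⟨hp.trans hx.1, hx.2.trans hq⟩
    nlinarith
  have hf'np : ∀ x ∈ Set.Icc m z, deriv f x ≤ 0 := by
    intro x hx
    have := endpoint_ge (hD2 m x) (fun y hy =>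
      hf''np m x le_rfl hx.2 y hy) hx.1
    rwa [hdm] at this
  -- f' z < 0
  have hf'z : deriv f z < 0 := by
    rcases lt_or_eq_of_le (hf'np z (right_mem_Icc.2 hmz.le)) with h | h
    · exact h
    · exfalso
      have := back_zero K V hVnonneg hVmono hdf hdf' hODE hm hmz.le hfz (by rw [← h])
      linarith
  ------------------------------------------------------------------
  -- STEP 2: local max of (f')^2 at z
  have hnear : ∀ᶠ x in nhds z, deriv f x < 0 :=
    hcont'.continuousAt.eventually_lt continuousAt_const hf'z
  obtain ⟨ε, hε, hball⟩ := Metric.eventually_nhds_iff.mp hnear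
  set δ : ℝ := min (ε / 2) ((z - m) / 2) with hδdef
  have hδpos : 0 < δ := lt_min (by linarith) (by linarith)
  have hδε : ∀ x, |x - z| ≤ δ → deriv f x < 0 := by
    intro x hx
    apply hball
    rw [Real.dist_eq]
    have : δ < ε := lt_of_le_of_lt (min_le_left _ _) (by linarith)
    linarith
  have hδm : m ≤ z - δ := by
    have : δ ≤ (z - m) / 2 := min_le_right _ _
    linarith
  -- f ≤ 0 and f' ≤ 0 on [z, z + δ]
  have hf'np2 : ∀ x ∈ Set.Icc z (z + δ), deriv f x ≤ 0 := by
    intro x hx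
    exact (hδε x (by rw [abs_le]; constructor <;> [linarith [hx.1]; linarith [hx.2]])).le
  have hfnp2 : ∀ x ∈ Set.Icc z (z + δ), f x ≤ 0 := by
    intro x hx
    have := endpoint_ge (hD1 z x) (fun y hy => hf'np2 y ⟨hy.1, hy.2.trans hx.2⟩) hx.1
    rwa [hfz] at this
  have hmaxn : IsLocalMax (fun x => deriv f x ^ 2) z := by
    filter_upwards [Icc_mem_nhds (by linarith : z - δ < z) (by linarith : z < z + δ)] with x hx
    rcases le_total x z with hxz | hxz
    · -- x ∈ [z - δ, z]
      apply endpoint_le (fun y _ => hDsq y) _ hxz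
      intro y hy
      have hy1 : y ∈ Set.Icc m z := ⟨hδm.trans (hx.1.trans hy.1), hy.2⟩
      have h1 := hf'np y hy1
      have h2 := hf''np m z le_rfl le_rfl y hy1
      nlinarith
    · -- x ∈ [z, z + δ]
      apply endpoint_ge (fun y _ => hDsq y) _ hxz
      intro y hy
      have hy1 : y ∈ Set.Icc z (z + δ) := ⟨hy.1, hy.2.trans hx.2⟩
      have hy0 : (0:ℝ) ≤ y := hz0.trans hy.1
      have h1 := hf'np2 y hy1
      have h2 := hfnp2 y hy1
      have h3 := hW0 y hy0
      rw [hODE y hy0]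
      nlinarith [mul_nonneg (mul_nonneg (neg_nonneg.2 h1) (neg_nonneg.2 h2)) h3]
  ------------------------------------------------------------------
  -- STEP 3: first zero m' of f' after z
  have hf'ivt : ∀ w, z < w → (∀ x, z < x → x ≤ w → deriv f x ≠ 0) →
      ∀ x, z ≤ x → x ≤ w → deriv f x < 0 := by
    intro w hw hno x hx1 hx2
    rcases eq_or_lt_of_le hx1 with rfl | hzx
    · exact hf'z
    by_contra hge
    push_neg at hge
    have h0 : (0:ℝ) ∈ Set.Icc (deriv f z) (deriv f x) := ⟨hf'z.le, hge⟩
    obtain ⟨w', hw1, hw2⟩ := intermediate_value_Icc hzx.le hcont'.continuousOn h0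
    have : z < w' := by
      rcases eq_or_lt_of_le hw1.1 with rfl | h
      · rw [hw2] at hf'z; exact absurd hf'z (lt_irrefl _)
      · exact h
    exact hno w' this (hw1.2.trans hx2) hw2
  have hZ'ne : ∃ w, z < w ∧ deriv f w = 0 := by
    by_contra hcon
    push_neg at hcon
    obtain ⟨ζ₂, hζ₂1, hζ₂2⟩ := exists_zero K V hVnonneg hVmono x₀ hx₀ hV₀ hdf hdf' hODE z hz0
    have hlt := endpoint_lt (hD1 z ζ₂) (fun y hy =>
      hf'ivt ζ₂ hζ₂1 (fun x hx1 hx2 => hcon x hx1) y hy.1.le hy.2.le) hζ₂1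
    rw [hfz, hζ₂2] at hlt
    exact lt_irrefl _ hlt
  set Z' : Set ℝ := {x | z < x ∧ deriv f x = 0} with hZ'def
  have hZ'ne' : Z'.Nonempty := hZ'ne
  have hZ'bdd : BddBelow Z' := by
    refine ⟨z, fun x hx => ?_⟩
    have hx' : z < x ∧ deriv f x = 0 := hx
    exact hx'.1.le
  set m' : ℝ := sInf Z' with hm'def
  have hm'cl : z ≤ m' ∧ deriv f m' = 0 := by
    have hcls : IsClosed {x : ℝ | z ≤ x ∧ deriv f x = 0} :=
      (isClosed_le continuous_const continuous_id).inter (isClosed_eq hcont' continuous_const)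
    have h1 : Z' ⊆ {x : ℝ | z ≤ x ∧ deriv f x = 0} := by
      intro x hx
      have hx' : z < x ∧ deriv f x = 0 := hx
      exact ⟨hx'.1.le, hx'.2⟩
    exact closure_minimal h1 hcls (csInf_mem_closure hZ'ne' hZ'bdd)
  have hdm' : deriv f m' = 0 := hm'cl.2
  have hzm' : z < m' := lt_of_le_of_ne hm'cl.1 (by
    intro h; rw [h, hdm'] at hf'z; exact lt_irrefl _ hf'z)
  have hm'0 : (0:ℝ) ≤ m' := hz0.trans hzm'.le
  have hf'neg3 : ∀ x, z ≤ x → x < m' → deriv f x < 0 := by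
    intro x hx1 hx2
    rcases eq_or_lt_of_le hx1 with rfl | hzx
    · exact hf'z
    have hno : ∀ y, z < y → y ≤ x → deriv f y ≠ 0 := by
      intro y hy1 hy2 hy0
      have : m' ≤ y := csInf_le hZ'bdd ⟨hy1, hy0⟩
      linarith
    exact hf'ivt x hzx hno x hx1 le_rfl
  have hf'np3 : ∀ x ∈ Set.Icc z m', deriv f x ≤ 0 := by
    intro x hx
    rcases eq_or_lt_of_le hx.2 with h | h
    · rw [h, hdm']
    · exact (hf'neg3 x hx.1 h).le
  have hfnp3 : ∀ x ∈ Set.Icc z m', f x ≤ 0 := by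
    intro x hx
    have := endpoint_ge (hD1 z x) (fun y hy => hf'np3 y ⟨hy.1, hy.2.trans hx.2⟩) hx.1
    rwa [hfz] at this
  have hfm' : f m' < 0 := by
    have := endpoint_lt (hD1 z m') (fun y hy => hf'neg3 y hy.1.le hy.2) hzm'
    rwa [hfz] at this
  ------------------------------------------------------------------
  -- STEP 4: local max of f^2 at m'
  have hnear2 : ∀ᶠ x in nhds m', f x < 0 :=
    hcont.continuousAt.eventually_lt continuousAt_const hfm'
  obtain ⟨ε₂, hε₂, hball₂⟩ := Metric.eventually_nhds_iff.mp hnear2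
  set δ₂ : ℝ := min (ε₂ / 2) ((m' - z) / 2) with hδ₂def
  have hδ₂pos : 0 < δ₂ := lt_min (by linarith) (by linarith)
  have hfneg4 : ∀ x, |x - m'| ≤ δ₂ → f x < 0 := by
    intro x hx
    apply hball₂
    rw [Real.dist_eq]
    have : δ₂ < ε₂ := lt_of_le_of_lt (min_le_left _ _) (by linarith)
    linarith
  have hmaxm : IsLocalMax (fun x => f x ^ 2) m' := by
    filter_upwards [Icc_mem_nhds hzm' (by linarith : m' < m' + δ₂)] with x hx
    rcases le_total x m' with hxm | hxm
    · apply endpoint_le (fun y _ => hDfsq y) _ hxm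
      intro y hy
      have hy1 : y ∈ Set.Icc z m' := ⟨hx.1.trans hy.1, hy.2⟩
      have h1 := hf'np3 y hy1
      have h2 := hfnp3 y hy1
      nlinarith
    · have hfneg5 : ∀ y ∈ Set.Icc m' x, f y < 0 := fun y hy =>
        hfneg4 y (abs_le.2 ⟨by linarith [hy.1], by linarith [hy.2, hx.2]⟩)
      have hf''nn : ∀ y ∈ Set.Icc m' x, 0 ≤ deriv (deriv f) y := by
        intro y hy
        have hy0 : (0:ℝ) ≤ y := hm'0.trans hy.1
        rw [hODE y hy0]
        have h1 := hW0 y hy0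
        have h2 := (hfneg5 y hy).le
        nlinarith
      have hf'nn : ∀ y ∈ Set.Icc m' x, 0 ≤ deriv f y := by
        intro y hy
        have := endpoint_le (hD2 m' y) (fun w hw => hf''nn w ⟨hw.1, hw.2.trans hy.2⟩) hy.1
        rwa [hdm'] at this
      apply endpoint_ge (fun y _ => hDfsq y) _ hxm
      intro y hy
      have h1 := hf'nn y hy
      have h2 := (hfneg5 y hy).le
      nlinarith
  ------------------------------------------------------------------
  -- STEP 5: energy inequalities
  have hkK : ∀ k ∈ Finset.range (K + 1), k ≤ K := fun k hk => Finset.mem_range_succ_iff.mp hk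
  have hE : ∀ a : ℝ, ∀ x ∈ Set.Icc m m', HasDerivAt
      (fun y => deriv f y ^ 2 +
        ∑ k ∈ Finset.range (K + 1), V k a / ((k : ℝ) + 1) * f y ^ (2 * (k + 1)))
      (∑ k ∈ Finset.range (K + 1),
        2 * (f x * deriv f x * (V k a - V k x)) * f x ^ (2 * k)) x :=
    fun a x hx => energy_deriv K V hdf hdf' hODE a x (hm.trans hx.1)
  have hpow : ∀ (k : ℕ) (x : ℝ), (0:ℝ) ≤ f x ^ (2 * k) :=
    fun k x => Even.pow_nonneg (even_two_mul k) _
  have hsum0 : ∀ a : ℝ, ∑ k ∈ Finset.range (K + 1),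
      V k a / ((k : ℝ) + 1) * f z ^ (2 * (k + 1)) = 0 := by
    intro a
    apply Finset.sum_eq_zero
    intro k hk
    rw [hfz, zero_pow (by omega : 2 * (k + 1) ≠ 0), mul_zero]
  -- signs of f f' on the two intervals
  have hff'1 : ∀ x ∈ Set.Icc m z, f x * deriv f x ≤ 0 :=
    fun x hx => mul_nonpos_of_nonneg_of_nonpos (hfnn x hx) (hf'np x hx)
  have hff'2 : ∀ x ∈ Set.Icc z m', 0 ≤ f x * deriv f x := fun x hx => by
    nlinarith [mul_nonneg (neg_nonneg.2 (hfnp3 x hx)) (neg_nonneg.2 (hf'np3 x hx))]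
  have hsub1 : Set.Icc m z ⊆ Set.Icc m m' := Set.Icc_subset_Icc le_rfl hzm'.le
  have hsub2 : Set.Icc z m' ⊆ Set.Icc m m' := Set.Icc_subset_Icc hmz.le le_rfl
  -- ineq 2 : E_z antitone on [m, z]
  have hineq2 : deriv f z ^ 2 ≤ ∑ k ∈ Finset.range (K + 1),
      V k z / ((k : ℝ) + 1) * f m ^ (2 * (k + 1)) := by
    have h := endpoint_ge (fun x hx => hE z x (hsub1 hx)) (fun x hx => by
      apply Finset.sum_nonpos
      intro k hk
      have t1 := hff'1 x hx
      have t2 : V k x ≤ V k z := hVmono k (hkK k hk) (hm.trans hx.1) hz0 hx.2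
      nlinarith [hpow k x,
        mul_nonpos_of_nonpos_of_nonneg t1 (sub_nonneg.2 t2)]) hmz.le
    rw [hsum0 z, hdm] at h
    norm_num at h
    linarith
  -- ineq 4 : E_m monotone on [m, z]
  have hineq4 : (∑ k ∈ Finset.range (K + 1),
      V k m / ((k : ℝ) + 1) * f m ^ (2 * (k + 1))) ≤ deriv f z ^ 2 := by
    have h := endpoint_le (fun x hx => hE m x (hsub1 hx)) (fun x hx => by
      apply Finset.sum_nonneg
      intro k hk
      have t1 := hff'1 x hx
      have t2 : V k m ≤ V k x := hVmono k (hkK k hk) hm (hm.trans hx.1) hx.1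
      nlinarith [hpow k x,
        mul_nonneg (neg_nonneg.2 t1) (neg_nonneg.2 (sub_nonpos.2 t2))]) hmz.le
    rw [hsum0 m, hdm] at h
    norm_num at h
    linarith
  -- ineq 1 : E_z antitone on [z, m']
  have hineq1 : (∑ k ∈ Finset.range (K + 1),
      V k z / ((k : ℝ) + 1) * f m' ^ (2 * (k + 1))) ≤ deriv f z ^ 2 := by
    have h := endpoint_ge (fun x hx => hE z x (hsub2 hx)) (fun x hx => by
      apply Finset.sum_nonpos
      intro k hk
      have t1 := hff'2 x hx
      have t2 : V k z ≤ V k x := hVmono k (hkK k hk) hz0 (hz0.trans hx.1) hx.1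
      nlinarith [hpow k x,
        mul_nonpos_of_nonneg_of_nonpos t1 (sub_nonpos.2 t2)]) hzm'.le
    rw [hsum0 z, hdm'] at h
    norm_num at h
    linarith
  -- ineq 3 : E_{m'} monotone on [z, m']
  have hineq3 : deriv f z ^ 2 ≤ ∑ k ∈ Finset.range (K + 1),
      V k m' / ((k : ℝ) + 1) * f m' ^ (2 * (k + 1)) := by
    have h := endpoint_le (fun x hx => hE m' x (hsub2 hx)) (fun x hx => by
      apply Finset.sum_nonneg
      intro k hk
      have t1 := hff'2 x hx
      have t2 : V k x ≤ V k m' := hVmono k (hkK k hk) (hz0.trans hx.1) hm'0 hx.2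
      nlinarith [hpow k x, mul_nonneg t1 (sub_nonneg.2 t2)]) hzm'.le
    rw [hsum0 m', hdm'] at h
    norm_num at h
    linarith
  exact ⟨z, m', hmz, hzm', hfz, hdm', ne_of_lt hfm', hmaxm, hmaxn,
    hineq1, hineq2, hineq3, hineq4⟩


private lemma step_main (K : ℕ) (V : ℕ → ℝ → ℝ)
    (hVnonneg : ∀ k ≤ K, ∀ x : ℝ, 0 ≤ x → 0 ≤ V k x)
    (hVmono : ∀ k ≤ K, MonotoneOn (V k) (Set.Ici (0 : ℝ)))
    (x₀ : ℝ) (hx₀ : 0 < x₀) (hV₀ : 0 < V 0 x₀)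
    {f : ℝ → ℝ} (hdf : Differentiable ℝ f) (hdf' : Differentiable ℝ (deriv f))
    (hODE : ∀ x : ℝ, 0 ≤ x →
      deriv (deriv f) x = -(∑ k ∈ Finset.range (K + 1), V k x * f x ^ (2 * k)) * f x)
    (m : ℝ) (hm : 0 ≤ m) (hdm : deriv f m = 0) (hfm : f m ≠ 0) :
    ∃ n m', m < n ∧ n < m' ∧ f n = 0 ∧ deriv f m' = 0 ∧ f m' ≠ 0 ∧
      IsLocalMax (fun x => f x ^ 2) m' ∧ IsLocalMax (fun x => deriv f x ^ 2) n ∧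
      (∑ k ∈ Finset.range (K + 1), V k n / ((k : ℝ) + 1) * f m' ^ (2 * (k + 1)))
        ≤ deriv f n ^ 2 ∧
      deriv f n ^ 2 ≤
        (∑ k ∈ Finset.range (K + 1), V k n / ((k : ℝ) + 1) * f m ^ (2 * (k + 1))) ∧
      deriv f n ^ 2 ≤
        (∑ k ∈ Finset.range (K + 1), V k m' / ((k : ℝ) + 1) * f m' ^ (2 * (k + 1))) ∧
      (∑ k ∈ Finset.range (K + 1), V k m / ((k : ℝ) + 1) * f m ^ (2 * (k + 1)))
        ≤ deriv f n ^ 2 := by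
  rcases hfm.lt_or_gt with hneg | hpos
  swap
  · exact step_pos K V hVnonneg hVmono x₀ hx₀ hV₀ hdf hdf' hODE m hm hdm hpos
  -- apply to g = -f
  have hgderiv : deriv (fun x => -f x) = fun x => -deriv f x := funext fun x => deriv.neg
  have hgdf : Differentiable ℝ (fun x => -f x) := hdf.neg
  have hgdf' : Differentiable ℝ (deriv (fun x => -f x)) := by
    rw [hgderiv]; exact hdf'.neg
  have hgODE : ∀ x : ℝ, 0 ≤ x → deriv (deriv (fun y => -f y)) x =
      -(∑ k ∈ Finset.range (K + 1), V k x * (-f x) ^ (2 * k)) * (-f x) := by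
    intro x hx
    rw [hgderiv]
    have h1 : deriv (fun y => -deriv f y) x = -deriv (deriv f) x := deriv.neg
    rw [h1, hODE x hx]
    have h2 : ∀ k ∈ Finset.range (K + 1), V k x * (-f x) ^ (2 * k)
        = V k x * f x ^ (2 * k) := fun k _ => by rw [Even.neg_pow (even_two_mul k)]
    rw [Finset.sum_congr rfl h2]
    ring
  have hgdm : deriv (fun x => -f x) m = 0 := by
    rw [hgderiv]; simp [hdm]
  have hgfm : 0 < -f m := by linarith
  obtain ⟨n, m', h1, h2, h3, h4, h5, h6, h7, h8, h9, h10, h11⟩ :=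
    step_pos K V hVnonneg hVmono x₀ hx₀ hV₀ hgdf hgdf' hgODE m hm hgdm hgfm
  have hpow : ∀ (r : ℝ) (k : ℕ), (-r) ^ (2 * (k + 1)) = r ^ (2 * (k + 1)) :=
    fun r k => Even.neg_pow (even_two_mul (k + 1)) r
  have hfun1 : (fun x => (-f x) ^ 2) = fun x => f x ^ 2 := funext fun x => neg_sq _
  have hfun2 : (fun x => deriv (fun y => -f y) x ^ 2) = fun x => deriv f x ^ 2 := by
    funext x; rw [hgderiv]; exact neg_sq _
  refine ⟨n, m', h1, h2, by simpa using h3, ?_, by simpa using h5, ?_, ?_, ?_, ?_, ?_, ?_⟩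
  · have := h4; rw [hgderiv] at this; simpa using this
  · simpa [hfun1] using h6
  · simpa [hfun2] using h7
  · simpa [hpow, hgderiv] using h8
  · simpa [hpow, hgderiv] using h9
  · simpa [hpow, hgderiv] using h10
  · simpa [hpow, hgderiv] using h11


/-- Oscillation and modified-energy lemma for `f'' = −V(x, f²) f`,
`V(x,y) = ∑_{k=0}^K V_k(x) y^k` with nonnegative nondecreasing coefficients `V_k` and
`V₀(x₀) > 0` for some `x₀ > 0`: with `m₀ = 0` there are unbounded strictly increasing
sequences of successive maximal points `m_j` of `f²` and `n_j` of `(f')²` interleaving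
as `m_{j-1} < n_j < m_j`, along which the stated energy inequalities hold. -/
theorem stmt_7 (K : ℕ) (V : ℕ → ℝ → ℝ)
    (hVnonneg : ∀ k ≤ K, ∀ x : ℝ, 0 ≤ x → 0 ≤ V k x)
    (hVmono : ∀ k ≤ K, MonotoneOn (V k) (Set.Ici (0 : ℝ)))
    (x₀ : ℝ) (hx₀ : 0 < x₀) (hV₀ : 0 < V 0 x₀)
    (f : ℝ → ℝ) (hf : ContDiff ℝ 2 f) (hf0 : 0 < f 0) (hf'0 : deriv f 0 = 0)
    (hODE : ∀ x : ℝ, 0 ≤ x →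
      deriv (deriv f) x = -(∑ k ∈ Finset.range (K + 1), V k x * f x ^ (2 * k)) * f x) :
    ∃ m n : ℕ → ℝ, m 0 = 0 ∧
      StrictMono m ∧ (∀ j : ℕ, 1 ≤ j → n j < n (j + 1)) ∧
      Tendsto m atTop atTop ∧ Tendsto n atTop atTop ∧
      ∀ j : ℕ, 1 ≤ j →
        0 < n j ∧ m (j - 1) < n j ∧ n j < m j ∧
        IsLocalMax (fun x => f x ^ 2) (m j) ∧
        IsLocalMax (fun x => deriv f x ^ 2) (n j) ∧
        (∑ k ∈ Finset.range (K + 1),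
            V k (n j) / ((k : ℝ) + 1) * f (m j) ^ (2 * (k + 1)))
          ≤ deriv f (n j) ^ 2 ∧
        deriv f (n j) ^ 2 ≤
          (∑ k ∈ Finset.range (K + 1),
            V k (n j) / ((k : ℝ) + 1) * f (m (j - 1)) ^ (2 * (k + 1))) ∧
        deriv f (n j) ^ 2 ≤
          (∑ k ∈ Finset.range (K + 1),
            V k (m j) / ((k : ℝ) + 1) * f (m j) ^ (2 * (k + 1))) ∧
        (∑ k ∈ Finset.range (K + 1),
            V k (m (j - 1)) / ((k : ℝ) + 1) * f (m (j - 1)) ^ (2 * (k + 1)))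
          ≤ deriv f (n j) ^ 2 := by
  obtain ⟨hdf, hdf', hc''⟩ := smooth_facts hf
  have hcont : Continuous f := hdf.continuous
  have hcont' : Continuous (deriv f) := hdf'.continuous
  -- state type
  have key : ∀ s : {x : ℝ // 0 ≤ x ∧ deriv f x = 0 ∧ f x ≠ 0},
      ∃ (n : ℝ) (m' : {x : ℝ // 0 ≤ x ∧ deriv f x = 0 ∧ f x ≠ 0}),
      s.1 < n ∧ n < m'.1 ∧ f n = 0 ∧
      IsLocalMax (fun x => f x ^ 2) m'.1 ∧ IsLocalMax (fun x => deriv f x ^ 2) n ∧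
      (∑ k ∈ Finset.range (K + 1), V k n / ((k : ℝ) + 1) * f m'.1 ^ (2 * (k + 1)))
        ≤ deriv f n ^ 2 ∧
      deriv f n ^ 2 ≤
        (∑ k ∈ Finset.range (K + 1), V k n / ((k : ℝ) + 1) * f s.1 ^ (2 * (k + 1))) ∧
      deriv f n ^ 2 ≤
        (∑ k ∈ Finset.range (K + 1), V k m'.1 / ((k : ℝ) + 1) * f m'.1 ^ (2 * (k + 1))) ∧
      (∑ k ∈ Finset.range (K + 1), V k s.1 / ((k : ℝ) + 1) * f s.1 ^ (2 * (k + 1)))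
        ≤ deriv f n ^ 2 := by
    rintro ⟨a, ha0, ha1, ha2⟩
    obtain ⟨n, m', h1, h2, h3, h4, h5, h6, h7, h8, h9, h10, h11⟩ :=
      step_main K V hVnonneg hVmono x₀ hx₀ hV₀ hdf hdf' hODE a ha0 ha1 ha2
    exact ⟨n, ⟨m', by linarith, h4, h5⟩, h1, h2, h3, h6, h7, h8, h9, h10, h11⟩
  choose N T hlt1 hlt2 hfN hmax1 hmax2 hi1 hi2 hi3 hi4 using key
  set s₀ : {x : ℝ // 0 ≤ x ∧ deriv f x = 0 ∧ f x ≠ 0} := ⟨0, le_rfl, hf'0, ne_of_gt hf0⟩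
    with hs₀def
  set seq : ℕ → {x : ℝ // 0 ≤ x ∧ deriv f x = 0 ∧ f x ≠ 0} := fun j => T^[j] s₀ with hseqdef
  have hseq : ∀ j : ℕ, seq (j + 1) = T (seq j) := fun j => Function.iterate_succ_apply' T j s₀
  set M : ℕ → ℝ := fun j => (seq j).1 with hMdef
  set n : ℕ → ℝ := fun j => N (seq (j - 1)) with hndef
  have hMsucc : ∀ j, M (j + 1) = (T (seq j)).1 := fun j => congrArg Subtype.val (hseq j)
  have hMeq : ∀ j : ℕ, 1 ≤ j → M j = (T (seq (j - 1))).1 := by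
    intro j hj
    have := hMsucc (j - 1)
    rwa [show j - 1 + 1 = j by omega] at this
  have hM0 : M 0 = 0 := rfl
  have hMnonneg : ∀ j, 0 ≤ M j := fun j => (seq j).2.1
  have hMderiv : ∀ j, deriv f (M j) = 0 := fun j => (seq j).2.2.1
  -- per-step facts
  have hjfact : ∀ j : ℕ, 1 ≤ j → M (j - 1) < n j ∧ n j < M j := by
    intro j hj
    constructor
    · exact hlt1 (seq (j - 1))
    · rw [hMeq j hj]
      exact hlt2 (seq (j - 1))
  have hmono : StrictMono M := by
    apply strictMono_nat_of_lt_succ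
    intro j
    have h1 : M j < N (seq j) := hlt1 (seq j)
    have h2 : N (seq j) < (T (seq j)).1 := hlt2 (seq j)
    rw [hMsucc j]; linarith
  -- tendsto of M
  have hnotbdd : ¬ BddAbove (Set.range M) := by
    intro hbdd
    have hL : Tendsto M atTop (nhds (⨆ j, M j)) := tendsto_atTop_ciSup hmono.monotone hbdd
    set L : ℝ := ⨆ j, M j with hLdef
    have hL0 : (0:ℝ) ≤ L := by
      have := le_ciSup hbdd 0
      rw [hM0] at this
      exact this
    have hMsub : Tendsto (fun j => M (j - 1)) atTop (nhds L) :=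
      hL.comp (tendsto_sub_atTop_nat 1)
    have hnL : Tendsto n atTop (nhds L) := by
      apply tendsto_of_tendsto_of_tendsto_of_le_of_le' hMsub hL
      · filter_upwards [eventually_ge_atTop 1] with j hj
        exact (hjfact j hj).1.le
      · filter_upwards [eventually_ge_atTop 1] with j hj
        exact (hjfact j hj).2.le
    have hfL : f L = 0 := by
      have hT : Tendsto (fun j => f (n j)) atTop (nhds (f L)) :=
        (hcont.continuousAt.tendsto).comp hnL
      have h0 : (fun j => f (n j)) =ᶠ[atTop] fun _ => (0:ℝ) := by
        filter_upwards [eventually_ge_atTop 1] with j hj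
        exact hfN (seq (j - 1))
      exact tendsto_nhds_unique (hT.congr' h0) tendsto_const_nhds
    have hf'L : deriv f L = 0 := by
      have hT : Tendsto (fun j => deriv f (M j)) atTop (nhds (deriv f L)) :=
        (hcont'.continuousAt.tendsto).comp hL
      have h0 : (fun j => deriv f (M j)) =ᶠ[atTop] fun _ => (0:ℝ) :=
        Eventually.of_forall fun j => hMderiv j
      exact tendsto_nhds_unique (hT.congr' h0) tendsto_const_nhds
    have := back_zero K V hVnonneg hVmono hdf hdf' hODE le_rfl hL0 hfL hf'L
    linarith
  have hMtop : Tendsto M atTop atTop := tendsto_atTop_atTop_of_monotone' hmono.monotone hnotbdd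
  have hntop : Tendsto n atTop atTop := by
    apply tendsto_atTop_mono' atTop _ (hMtop.comp (tendsto_sub_atTop_nat 1))
    filter_upwards [eventually_ge_atTop 1] with j hj
    exact (hjfact j hj).1.le
  refine ⟨M, n, hM0, hmono, ?_, hMtop, hntop, ?_⟩
  · intro j hj
    have h1 : n j < M j := (hjfact j hj).2
    have h2 : M ((j + 1) - 1) < n (j + 1) := (hjfact (j + 1) (by omega)).1
    simp only [Nat.add_sub_cancel] at h2
    linarith
  · intro j hj
    refine ⟨?_, (hjfact j hj).1, (hjfact j hj).2, ?_, hmax2 (seq (j - 1)), ?_, ?_, ?_, ?_⟩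
    · have : (0:ℝ) ≤ M (j - 1) := hMnonneg (j - 1)
      linarith [(hjfact j hj).1]
    · rw [hMeq j hj]; exact hmax1 (seq (j - 1))
    · rw [hMeq j hj]; exact hi1 (seq (j - 1))
    · exact hi2 (seq (j - 1))
    · rw [hMeq j hj]; exact hi3 (seq (j - 1))
    · exact hi4 (seq (j - 1))
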